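/- arXiv:1302.7300 — 3 statements merged into one kernel-verified Lean document; each statement's English description precedes it below -/
import Mathlib

section
/- For every integer r ≥ 1 and every complex number s with Re(s) > 1, the Dirichlet series of the divisor function of order r satisfies ∑_{n=1}^∞ τ^(r)(n)/n^s = ζ(s)·ζ((r+1)s)/ζ((2r+2)s), where ζ is the Riemann zeta function. -/
open Filter

/-- The divisor function of order `r`: `τ^(r)(n) = 2^{#{p prime : p^(r+1) ∣ n}}`. -/
def tauOrd (r n : ℕ) : ℕ :=
  2 ^ (n.primeFactors.filter (fun p => p ^ (r + 1) ∣ n)).card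

open ArithmeticFunction Complex LSeries
open scoped LSeries.notation
open scoped ArithmeticFunction.Moebius ArithmeticFunction.zeta

namespace TauOrdAux

lemma powInj {k : ℕ} (hk : k ≠ 0) : Function.Injective (· ^ k : ℕ → ℕ) :=
  Nat.pow_left_injective hk

/-- `pullPow k f` is the function whose value at `m ^ k` is `f m` and `0` elsewhere. -/
noncomputable def pullPow (k : ℕ) (f : ℕ → ℂ) : ℕ → ℂ := Function.extend (· ^ k) f 0

lemma pullPow_pow {k : ℕ} (hk : k ≠ 0) (f : ℕ → ℂ) (m : ℕ) : pullPow k f (m ^ k) = f m :=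
  (powInj hk).extend_apply f (0 : ℕ → ℂ) m

lemma pullPow_eq_zero {k : ℕ} (f : ℕ → ℂ) {d : ℕ} (hd : ¬∃ m, m ^ k = d) :
    pullPow k f d = 0 :=
  Function.extend_apply' f (0 : ℕ → ℂ) d hd

lemma LSeries_pullPow (k : ℕ) (hk : k ≠ 0) (f : ℕ → ℂ) (s : ℂ) :
    LSeries (pullPow k f) s = LSeries f ((k : ℂ) * s) := by
  unfold LSeries
  rw [← Function.Injective.tsum_eq (g := (· ^ k : ℕ → ℕ)) (powInj hk) ?_]
  · refine tsum_congr fun m => ?_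
    rcases eq_or_ne m 0 with rfl | hm
    · rw [zero_pow hk, LSeries.term_zero, LSeries.term_zero]
    · rw [LSeries.term_of_ne_zero (pow_ne_zero _ hm), LSeries.term_of_ne_zero hm,
        pullPow_pow hk, Nat.cast_pow, natCast_cpow_natCast_mul]
  · intro d hd
    by_contra hr
    have : pullPow k f d = 0 := pullPow_eq_zero f (by simpa [Set.range] using hr)
    apply hd
    rcases eq_or_ne d 0 with rfl | h0
    · exact LSeries.term_zero f s
    · rw [LSeries.term_of_ne_zero h0, this, zero_div]

lemma squarefree_prod_primes : ∀ {T : Finset ℕ}, (∀ p ∈ T, p.Prime) →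
    Squarefree (∏ p ∈ T, p) := by
  intro T
  induction T using Finset.induction_on with
  | empty => intro _; simpa using squarefree_one
  | @insert a T' ha ih =>
    intro hT
    rw [Finset.prod_insert ha]
    have hcop : Nat.Coprime a (∏ p ∈ T', p) :=
      Nat.Coprime.prod_right fun p hp =>
        (Nat.coprime_primes (hT a (Finset.mem_insert_self a T'))
          (hT p (Finset.mem_insert_of_mem hp))).mpr (fun h => ha (h ▸ hp))
    exact (Nat.squarefree_mul hcop).mpr ⟨(hT a (Finset.mem_insert_self a T')).squarefree,
      ih fun p hp => hT p (Finset.mem_insert_of_mem hp)⟩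

lemma prod_pow_dvd {n k : ℕ} : ∀ {T : Finset ℕ}, (∀ p ∈ T, p.Prime) →
    (∀ p ∈ T, p ^ k ∣ n) → (∏ p ∈ T, p) ^ k ∣ n := by
  intro T
  induction T using Finset.induction_on with
  | empty => intro _ _; simpa using one_dvd n
  | @insert a T' ha ih =>
    intro hT hd
    rw [Finset.prod_insert ha, mul_pow]
    have hcop : Nat.Coprime (a ^ k) ((∏ p ∈ T', p) ^ k) := by
      apply Nat.Coprime.pow
      exact Nat.Coprime.prod_right fun p hp =>
        (Nat.coprime_primes (hT a (Finset.mem_insert_self a T'))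
          (hT p (Finset.mem_insert_of_mem hp))).mpr (fun h => ha (h ▸ hp))
    exact hcop.mul_dvd_of_dvd_of_dvd (hd a (Finset.mem_insert_self a T'))
      (ih (fun p hp => hT p (Finset.mem_insert_of_mem hp))
        (fun p hp => hd p (Finset.mem_insert_of_mem hp)))

open Classical in
lemma tauOrd_eq_card (r n : ℕ) (hn : n ≠ 0) :
    tauOrd r n
      = ((n.divisors).filter (fun d => ∃ m, Squarefree m ∧ m ^ (r + 1) = d)).card := by
  classical
  set S := n.primeFactors.filter (fun p => p ^ (r + 1) ∣ n) with hS
  have hSprime : ∀ p ∈ S, p.Prime := fun p hp =>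
    (Nat.mem_primeFactors.mp (Finset.mem_filter.mp hp).1).1
  rw [show tauOrd r n = S.powerset.card by rw [Finset.card_powerset]; rfl]
  apply Finset.card_bij (fun T _ => (∏ p ∈ T, p) ^ (r + 1))
  · intro T hT
    rw [Finset.mem_powerset] at hT
    have hTp : ∀ p ∈ T, p.Prime := fun p hp => hSprime p (hT hp)
    refine Finset.mem_filter.mpr ⟨Nat.mem_divisors.mpr ⟨?_, hn⟩,
      ⟨∏ p ∈ T, p, squarefree_prod_primes hTp, rfl⟩⟩
    exact prod_pow_dvd hTp fun p hp => (Finset.mem_filter.mp (hT hp)).2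
  · intro T1 h1 T2 h2 heq
    have h3 : (∏ p ∈ T1, p) = ∏ p ∈ T2, p := powInj (Nat.succ_ne_zero r) heq
    have hTp1 : ∀ p ∈ T1, p.Prime := fun p hp => hSprime p (Finset.mem_powerset.mp h1 hp)
    have hTp2 : ∀ p ∈ T2, p.Prime := fun p hp => hSprime p (Finset.mem_powerset.mp h2 hp)
    rw [← Nat.primeFactors_prod hTp1, ← Nat.primeFactors_prod hTp2, h3]
  · intro d hd
    obtain ⟨hdvd, m, hm, rfl⟩ := Finset.mem_filter.mp hd
    rw [Nat.mem_divisors] at hdvd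
    refine ⟨m.primeFactors, Finset.mem_powerset.mpr ?_,
      by rw [Nat.prod_primeFactors_of_squarefree hm]⟩
    intro p hp
    obtain ⟨hpp, hpm, -⟩ := Nat.mem_primeFactors.mp hp
    have h1 : p ^ (r + 1) ∣ n := dvd_trans (pow_dvd_pow_of_dvd hpm _) hdvd.1
    exact Finset.mem_filter.mpr ⟨Nat.mem_primeFactors.mpr
      ⟨hpp, dvd_trans (dvd_pow_self p (Nat.succ_ne_zero r)) h1, hn⟩, h1⟩

/-- The arithmetic function `d ↦ μ m` if `d = m ^ 2`, `0` otherwise. -/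
noncomputable def sqMu : ArithmeticFunction ℤ :=
  ⟨Function.extend (· ^ 2) (fun m => μ m) 0, by
    have h0 : (0 : ℕ) = 0 ^ 2 := by norm_num
    rw [h0, Function.Injective.extend_apply (powInj two_ne_zero)]
    simp⟩

lemma sqMu_sq (m : ℕ) : sqMu (m ^ 2) = μ m :=
  Function.Injective.extend_apply (powInj two_ne_zero) _ _ _

lemma sqMu_eq_zero {d : ℕ} (hd : ¬∃ m, m ^ 2 = d) : sqMu d = 0 :=
  Function.extend_apply' _ _ _ hd

lemma isMultiplicative_sqMu : sqMu.IsMultiplicative := by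
  constructor
  · have h1 : (1 : ℕ) = 1 ^ 2 := by norm_num
    rw [h1, sqMu_sq]
    simp
  · intro m n hmn
    by_cases hm : ∃ x, x ^ 2 = m
    · by_cases hn : ∃ y, y ^ 2 = n
      · obtain ⟨x, rfl⟩ := hm; obtain ⟨y, rfl⟩ := hn
        rw [← mul_pow, sqMu_sq, sqMu_sq, sqMu_sq]
        have hxy : x.Coprime y := by
          have h := hmn
          rw [Nat.coprime_pow_left_iff two_pos, Nat.coprime_pow_right_iff two_pos] at h
          exact h
        exact isMultiplicative_moebius.map_mul_of_coprime hxy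
      · rw [sqMu_eq_zero hn, mul_zero]
        apply sqMu_eq_zero
        rintro ⟨w, hw⟩
        apply hn
        obtain ⟨y, hy⟩ := exists_eq_pow_of_mul_eq_pow (α := ℕ) (a := n) (b := m)
          (by rw [Nat.isUnit_iff]; exact hmn.symm) (k := 2) (by rw [mul_comm]; exact hw.symm)
        exact ⟨y, hy.symm⟩
    · rw [sqMu_eq_zero hm, zero_mul]
      apply sqMu_eq_zero
      rintro ⟨w, hw⟩
      apply hm
      obtain ⟨x, hx⟩ := exists_eq_pow_of_mul_eq_pow (α := ℕ) (a := m) (b := n)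
        (by rw [Nat.isUnit_iff]; exact hmn) (k := 2) hw.symm
      exact ⟨x, hx.symm⟩

lemma sqMu_prime_pow {p : ℕ} (hp : p.Prime) (i : ℕ) :
    sqMu (p ^ i) = if i = 0 then 1 else if i = 2 then -1 else 0 := by
  rcases Nat.even_or_odd i with he | ho
  · obtain ⟨j, rfl⟩ := he
    rw [show p ^ (j + j) = (p ^ j) ^ 2 by rw [← pow_mul, mul_two], sqMu_sq]
    match j with
    | 0 => simp
    | 1 => simp [moebius_apply_prime hp]
    | (j + 2) =>
      rw [moebius_apply_prime_pow hp (by omega)]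
      rw [if_neg (by omega), if_neg (by omega), if_neg (by omega)]
  · obtain ⟨j', hj'⟩ := ho
    have hnsq : ¬∃ x, x ^ 2 = p ^ i := by
      rintro ⟨x, hx⟩
      obtain ⟨j, hj, rfl⟩ := (Nat.dvd_prime_pow hp).mp
        (dvd_trans (dvd_pow_self x two_ne_zero) (dvd_of_eq hx))
      rw [← pow_mul] at hx
      have h2 : j * 2 = i := Nat.pow_right_injective hp.two_le hx
      omega
    rw [sqMu_eq_zero hnsq, if_neg (by omega), if_neg (by omega)]

lemma sqMu_mul_zeta : sqMu * (ζ : ArithmeticFunction ℤ) = ArithmeticFunction.pmul μ μ := by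
  rw [ArithmeticFunction.IsMultiplicative.eq_iff_eq_on_prime_powers _
    (isMultiplicative_sqMu.mul isMultiplicative_zeta.natCast) _
    (isMultiplicative_moebius.pmul isMultiplicative_moebius)]
  intro p i hp
  rw [coe_mul_zeta_apply, Nat.sum_divisors_prime_pow hp, pmul_apply]
  have hterm : ∀ k ∈ Finset.range (i + 1),
      sqMu (p ^ k) = (if k = 0 then (1 : ℤ) else 0) + (if k = 2 then (-1 : ℤ) else 0) := by
    intro k _
    rw [sqMu_prime_pow hp]
    rcases eq_or_ne k 0 with rfl | h0
    · norm_num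
    · rcases eq_or_ne k 2 with rfl | h2
      · norm_num
      · simp [h0, h2]
  rw [Finset.sum_congr rfl hterm, Finset.sum_add_distrib,
    Finset.sum_ite_eq' (Finset.range (i + 1)) 0 (fun _ => (1 : ℤ)),
    Finset.sum_ite_eq' (Finset.range (i + 1)) 2 (fun _ => (-1 : ℤ))]
  simp only [Finset.mem_range]
  match i with
  | 0 => norm_num
  | 1 => rw [if_pos (by omega), if_neg (by omega)]; simp [moebius_apply_prime hp]
  | (i + 2) =>
    rw [if_pos (by omega), if_pos (by omega), moebius_apply_prime_pow hp (by omega),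
      if_neg (by omega)]
    norm_num

lemma sum_sqMu (n : ℕ) :
    ∑ d ∈ n.divisors, sqMu d = if Squarefree n then 1 else 0 := by
  calc ∑ d ∈ n.divisors, sqMu d = (sqMu * (ζ : ArithmeticFunction ℤ)) n :=
        coe_mul_zeta_apply.symm
    _ = ArithmeticFunction.pmul μ μ n := by rw [sqMu_mul_zeta]
    _ = μ n * μ n := pmul_apply
    _ = μ n ^ 2 := (sq (μ n)).symm
    _ = if Squarefree n then 1 else 0 := moebius_sq

/-- The squarefree indicator, as a complex-valued sequence. -/
noncomputable def sfC : ℕ → ℂ := fun n => if Squarefree n then 1 else 0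

lemma sqMuC_eq : (fun d : ℕ => ((sqMu d : ℤ) : ℂ)) = pullPow 2 ↗μ := by
  funext d
  by_cases h : ∃ m, m ^ 2 = d
  · obtain ⟨m, rfl⟩ := h
    rw [sqMu_sq, pullPow_pow two_ne_zero]
  · rw [sqMu_eq_zero h, pullPow_eq_zero _ h]
    simp

lemma pullPow_sfC_one {k : ℕ} (hk : k ≠ 0) {d : ℕ}
    (h : ∃ m, Squarefree m ∧ m ^ k = d) : pullPow k sfC d = 1 := by
  obtain ⟨m, hm, rfl⟩ := h
  rw [pullPow_pow hk]
  exact if_pos hm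

lemma pullPow_sfC_zero {k : ℕ} (hk : k ≠ 0) {d : ℕ}
    (h : ¬∃ m, Squarefree m ∧ m ^ k = d) : pullPow k sfC d = 0 := by
  by_cases h' : ∃ m, m ^ k = d
  · obtain ⟨m, rfl⟩ := h'
    rw [pullPow_pow hk]
    exact if_neg fun hm => h ⟨m, hm, rfl⟩
  · exact pullPow_eq_zero _ h'

lemma conv_one_eq (f : ℕ → ℂ) (n : ℕ) :
    (f ⍟ (1 : ℕ → ℂ)) n = ∑ d ∈ n.divisors, f d := by
  simp only [LSeries.convolution_def]
  rw [Nat.sum_divisorsAntidiagonal (f := fun a b => f a * (1 : ℕ → ℂ) b)]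
  simp

lemma one_conv_eq (g : ℕ → ℂ) (n : ℕ) :
    ((1 : ℕ → ℂ) ⍟ g) n = ∑ d ∈ n.divisors, g d := by
  simp only [LSeries.convolution_def]
  rw [Nat.sum_divisorsAntidiagonal' (f := fun a b => (1 : ℕ → ℂ) a * g b)]
  simp

lemma tau_eq_conv (r : ℕ) {n : ℕ} (hn : n ≠ 0) :
    (tauOrd r n : ℂ) = ((1 : ℕ → ℂ) ⍟ pullPow (r + 1) sfC) n := by
  classical
  rw [one_conv_eq, tauOrd_eq_card r n hn,
    ← Finset.sum_filter_add_sum_filter_not n.divisors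
      (fun d => ∃ m, Squarefree m ∧ m ^ (r + 1) = d) (pullPow (r + 1) sfC),
    Finset.sum_congr rfl
      (fun d hd => pullPow_sfC_one (Nat.succ_ne_zero r) (Finset.mem_filter.mp hd).2),
    Finset.sum_congr rfl
      (fun d hd => pullPow_sfC_zero (Nat.succ_ne_zero r) (Finset.mem_filter.mp hd).2)]
  simp

lemma sfC_eq_conv {n : ℕ} (hn : n ≠ 0) :
    sfC n = ((fun d : ℕ => ((sqMu d : ℤ) : ℂ)) ⍟ (1 : ℕ → ℂ)) n := by
  rw [conv_one_eq,
    show (∑ d ∈ n.divisors, ((sqMu d : ℤ) : ℂ)) = ((∑ d ∈ n.divisors, sqMu d : ℤ) : ℂ) by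
      push_cast; rfl,
    sum_sqMu]
  unfold sfC
  split_ifs <;> simp

lemma abs_sqMu_le (d : ℕ) : |sqMu d| ≤ 1 := by
  by_cases h : ∃ m, m ^ 2 = d
  · obtain ⟨m, rfl⟩ := h
    rw [sqMu_sq]
    exact abs_moebius_le_one
  · rw [sqMu_eq_zero h]
    norm_num

lemma one_lt_re_nat_mul {k : ℕ} (hk : 1 ≤ k) {s : ℂ} (hs : 1 < s.re) :
    1 < ((k : ℂ) * s).re := by
  have h : ((k : ℂ) * s).re = (k : ℝ) * s.re := by simp [Complex.mul_re]
  rw [h]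
  calc (1 : ℝ) < s.re := hs
    _ ≤ (k : ℝ) * s.re := le_mul_of_one_le_left (by linarith) (by exact_mod_cast hk)

end TauOrdAux

open TauOrdAux

theorem stmt_0 (r : ℕ) (hr : 1 ≤ r) (s : ℂ) (hs : 1 < s.re) :
    ∑' n : ℕ, (tauOrd r n : ℂ) / (n : ℂ) ^ s =
      riemannZeta s * riemannZeta (((r : ℂ) + 1) * s) /
        riemannZeta ((2 * (r : ℂ) + 2) * s) := by
  have hs0 : s ≠ 0 := fun h => by rw [h] at hs; simp at hs; linarith
  have hrs : 1 < ((((r : ℕ) + 1 : ℕ) : ℂ) * s).re :=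
    one_lt_re_nat_mul (Nat.le_add_left 1 r) hs
  have h2rs : 1 < ((((2 * (r + 1) : ℕ)) : ℂ) * s).re :=
    one_lt_re_nat_mul (by omega) hs
  -- rewrite LHS as an LSeries
  have h1 : ∑' n : ℕ, (tauOrd r n : ℂ) / (n : ℂ) ^ s
      = LSeries (fun n => (tauOrd r n : ℂ)) s := by
    refine tsum_congr fun n => ?_
    rcases eq_or_ne n 0 with rfl | hn
    · rw [LSeries.term_zero]
      simp [Complex.zero_cpow hs0]
    · rw [LSeries.term_of_ne_zero hn]
  rw [h1, LSeries_congr (s := s) (fun {n} hn => tau_eq_conv r hn)]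
  have hsum1 : LSeriesSummable 1 s := LSeriesSummable_one_iff.mpr hs
  have hsumg : LSeriesSummable (pullPow (r + 1) sfC) s := by
    refine LSeriesSummable_of_bounded_of_one_lt_re (m := 1) (fun n _ => ?_) hs
    by_cases h : ∃ m, Squarefree m ∧ m ^ (r + 1) = n
    · rw [pullPow_sfC_one (Nat.succ_ne_zero r) h]; simp
    · rw [pullPow_sfC_zero (Nat.succ_ne_zero r) h]; simp
  rw [LSeries_convolution' hsum1 hsumg, LSeries_one_eq_riemannZeta hs,
    LSeries_pullPow (r + 1) (Nat.succ_ne_zero r) sfC s]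
  -- now handle `LSeries sfC (↑(r+1) * s)`
  set w : ℂ := (((r : ℕ) + 1 : ℕ) : ℂ) * s with hw
  have hsumMu : LSeriesSummable (fun d : ℕ => ((sqMu d : ℤ) : ℂ)) w := by
    refine LSeriesSummable_of_bounded_of_one_lt_re (m := 1) (fun n _ => ?_) hrs
    rw [Complex.norm_intCast]
    exact_mod_cast abs_sqMu_le n
  have hsum1w : LSeriesSummable 1 w := LSeriesSummable_one_iff.mpr hrs
  have hwu : (2 : ℂ) * w = (((2 * (r + 1) : ℕ)) : ℂ) * s := by
    rw [hw]; push_cast; ring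
  have h2w : 1 < ((2 : ℂ) * w).re := by rw [hwu]; exact h2rs
  have hsf : LSeries sfC w
      = (riemannZeta ((2 : ℂ) * w))⁻¹ * riemannZeta w := by
    rw [LSeries_congr (s := w) (fun {n} hn => sfC_eq_conv hn),
      LSeries_convolution' hsumMu hsum1w, LSeries_one_eq_riemannZeta hrs]
    congr 1
    have hmu : LSeries (fun d : ℕ => ((sqMu d : ℤ) : ℂ)) w = LSeries ↗μ ((2 : ℂ) * w) := by
      rw [sqMuC_eq, LSeries_pullPow 2 two_ne_zero ↗μ w]
      norm_num
    rw [hmu]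
    have hzm := ArithmeticFunction.LSeries_zeta_mul_Lseries_moebius h2w
    rw [ArithmeticFunction.LSeries_zeta_eq_riemannZeta h2w] at hzm
    exact eq_inv_of_mul_eq_one_right hzm
  rw [hsf]
  rw [show (2 : ℂ) * w = (2 * (r : ℂ) + 2) * s from by rw [hw]; push_cast; ring,
    show w = ((r : ℂ) + 1) * s from by rw [hw]; push_cast; ring]
  have hzne : riemannZeta ((2 * (r : ℂ) + 2) * s) ≠ 0 := by
    refine riemannZeta_ne_zero_of_one_lt_re ?_
    rw [show (2 * (r : ℂ) + 2) * s = (((2 * (r + 1) : ℕ)) : ℂ) * s from by push_cast; ring]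
    exact h2rs
  field_simp
end

section
/- For every integer r ≥ 1 and every integer n ≥ 1, τ^(r)(n) = ∑ μ(m), where the sum runs over all triples (k, l, m) of positive integers with k · l^(r+1) · m^(2r+2) = n, and μ is the Möbius function. (In other words, τ^(r) is the Dirichlet convolution of n ↦ τ(1,r+1;n) with μ_{2r+2}.) -/
open Filter

open Finset ArithmeticFunction in
private lemma squarefree_prod_primes : ∀ s : Finset ℕ, (∀ p ∈ s, p.Prime) →
    Squarefree (∏ p ∈ s, p) := by
  intro s
  induction s using Finset.induction_on with
  | empty => intro _; simp only [Finset.prod_empty]; exact squarefree_one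
  | @insert a s ha ih =>
    intro hs
    have hap : a.Prime := hs a (mem_insert_self a s)
    have hsp : ∀ p ∈ s, p.Prime := fun p hp => hs p (mem_insert_of_mem hp)
    rw [Finset.prod_insert ha, Nat.squarefree_mul_iff]
    refine ⟨Nat.Coprime.prod_right fun p hp => ?_, hap.squarefree, ih hsp⟩
    exact (Nat.coprime_primes hap (hsp p hp)).mpr (by rintro rfl; exact ha hp)

open Finset ArithmeticFunction ArithmeticFunction.Moebius in
private lemma sum_moebius_sq_dvd {d : ℕ} (hd : d ≠ 0) :
    ∑ m ∈ d.divisors.filter (fun m => m ^ 2 ∣ d), (μ m : ℤ) =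
      if Squarefree d then 1 else 0 := by
  obtain ⟨a, b, hab, ha⟩ := Nat.sq_mul_squarefree d
  have hb : b ≠ 0 := by rintro rfl; simp at hab; exact hd hab.symm
  have ha0 : a ≠ 0 := by rintro rfl; simp at hab; exact hd hab.symm
  have hb2d : b ^ 2 ∣ d := ⟨a, hab.symm⟩
  have key : ∀ m : ℕ, m ^ 2 ∣ d ↔ m ∣ b := by
    intro m
    constructor
    · intro hmd
      have hm : m ≠ 0 := by rintro rfl; simp at hmd; exact hd hmd
      rw [← Nat.factorization_le_iff_dvd hm hb, Finsupp.le_def]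
      intro p
      have h2 : (m ^ 2).factorization ≤ d.factorization :=
        (Nat.factorization_le_iff_dvd (pow_ne_zero 2 hm) hd).mpr hmd
      have h2p := Finsupp.le_def.mp h2 p
      rw [Nat.factorization_pow] at h2p
      have hdfac : d.factorization = 2 • b.factorization + a.factorization := by
        rw [← hab, Nat.factorization_mul (pow_ne_zero 2 hb) ha0, Nat.factorization_pow]
      rw [hdfac] at h2p
      have hale : a.factorization p ≤ 1 := ha.natFactorization_le_one p
      simp only [Finsupp.add_apply, Finsupp.smul_apply, smul_eq_mul] at h2p
      omega
    · intro hmb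
      exact dvd_trans (pow_dvd_pow_of_dvd hmb 2) hb2d
  have hset : d.divisors.filter (fun m => m ^ 2 ∣ d) = b.divisors := by
    ext m
    simp only [mem_filter, Nat.mem_divisors]
    constructor
    · rintro ⟨⟨_, _⟩, hsq⟩; exact ⟨(key m).mp hsq, hb⟩
    · rintro ⟨hmb, _⟩
      exact ⟨⟨dvd_trans hmb (dvd_trans (dvd_pow_self b two_ne_zero) hb2d), hd⟩, (key m).mpr hmb⟩
  rw [hset, ← ArithmeticFunction.coe_mul_zeta_apply, ArithmeticFunction.moebius_mul_coe_zeta,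
    ArithmeticFunction.one_apply]
  congr 1
  simp only [eq_iff_iff]
  constructor
  · rintro rfl; rw [← hab]; simpa using ha
  · intro hsq
    have : IsUnit b := hsq b ⟨a, by rw [← hab]; ring⟩
    exact Nat.isUnit_iff.mp this

open Finset ArithmeticFunction in
private lemma card_sf (r n : ℕ) (hn : n ≠ 0) :
    (n.divisors.filter fun d => d ^ (r + 1) ∣ n ∧ Squarefree d).card =
      2 ^ (n.primeFactors.filter fun p => p ^ (r + 1) ∣ n).card := by
  rw [← Finset.card_powerset]
  apply Finset.card_nbij' (fun d => d.primeFactors) (fun s => ∏ p ∈ s, p)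
  · intro d hd
    simp only [Finset.mem_coe, mem_filter, Nat.mem_divisors] at hd
    obtain ⟨⟨hdn, _⟩, hdr, _⟩ := hd
    rw [Finset.mem_coe, Finset.mem_powerset]
    intro p hp
    rw [Nat.mem_primeFactors] at hp
    obtain ⟨hpp, hpd, _⟩ := hp
    rw [mem_filter, Nat.mem_primeFactors]
    exact ⟨⟨hpp, hpd.trans hdn, hn⟩, (pow_dvd_pow_of_dvd hpd (r + 1)).trans hdr⟩
  · intro s hs
    rw [Finset.mem_coe, Finset.mem_powerset] at hs
    have hsp : ∀ p ∈ s, p.Prime := fun p hp => by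
      have := hs hp; rw [mem_filter, Nat.mem_primeFactors] at this; exact this.1.1
    have hsf : Squarefree (∏ p ∈ s, p) := squarefree_prod_primes s hsp
    have hd0 : (∏ p ∈ s, p) ≠ 0 := hsf.ne_zero
    have hdvd : (∏ p ∈ s, p) ^ (r + 1) ∣ n := by
      rw [← Nat.factorization_le_iff_dvd (pow_ne_zero _ hd0) hn, Finsupp.le_def]
      intro p
      rw [Nat.factorization_pow]
      simp only [Finsupp.smul_apply, smul_eq_mul]
      by_cases hp : p ∈ s
      · have hpp : p.Prime := hsp p hp
        have hfac1 : (∏ p ∈ s, p).factorization p ≤ 1 := hsf.natFactorization_le_one p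
        have hmem := hs hp
        rw [mem_filter] at hmem
        have hle : r + 1 ≤ n.factorization p :=
          (Nat.Prime.pow_dvd_iff_le_factorization hpp hn).mp hmem.2
        calc (r + 1) * (∏ p ∈ s, p).factorization p ≤ (r + 1) * 1 :=
              Nat.mul_le_mul_left _ hfac1
          _ ≤ n.factorization p := by omega
      · have : p ∉ (∏ p ∈ s, p).factorization.support := by
          rw [Nat.support_factorization, Nat.primeFactors_prod hsp]; exact hp
        rw [Finsupp.notMem_support_iff.mp this]
        simp
    simp only [Finset.mem_coe, mem_filter, Nat.mem_divisors]
    exact ⟨⟨(dvd_pow_self _ (Nat.succ_ne_zero r)).trans hdvd, hn⟩, hdvd, hsf⟩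
  · intro d hd
    simp only [Finset.mem_coe, mem_filter, Nat.mem_divisors] at hd
    exact Nat.prod_primeFactors_of_squarefree hd.2.2
  · intro s hs
    rw [Finset.mem_coe, Finset.mem_powerset] at hs
    exact Nat.primeFactors_prod fun p hp => by
      have := hs hp; rw [mem_filter, Nat.mem_primeFactors] at this; exact this.1.1

open Finset ArithmeticFunction ArithmeticFunction.Moebius in
theorem stmt_1 (r : ℕ) (hr : 1 ≤ r) (n : ℕ) (hn : 1 ≤ n) :
    (tauOrd r n : ℤ) =
      ∑ t ∈ (Finset.Icc 1 n ×ˢ Finset.Icc 1 n ×ˢ Finset.Icc 1 n).filter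
        (fun t : ℕ × ℕ × ℕ => t.1 * t.2.1 ^ (r + 1) * t.2.2 ^ (2 * r + 2) = n),
        ArithmeticFunction.moebius t.2.2 := by
  have hn0 : n ≠ 0 := by omega
  have hnpos : 0 < n := hn
  have step1 :
      ∑ t ∈ (Finset.Icc 1 n ×ˢ Finset.Icc 1 n ×ˢ Finset.Icc 1 n).filter
          (fun t : ℕ × ℕ × ℕ => t.1 * t.2.1 ^ (r + 1) * t.2.2 ^ (2 * r + 2) = n),
        (μ t.2.2 : ℤ) =
      ∑ x ∈ (n.divisors.filter fun d => d ^ (r + 1) ∣ n).sigma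
          (fun d => d.divisors.filter fun m => m ^ 2 ∣ d), (μ x.2 : ℤ) := by
    apply Finset.sum_nbij' (i := fun t : ℕ × ℕ × ℕ => (⟨t.2.1 * t.2.2 ^ 2, t.2.2⟩ : (_ : ℕ) × ℕ))
      (j := fun x : (_ : ℕ) × ℕ => (n / x.1 ^ (r + 1), x.1 / x.2 ^ 2, x.2))
    · rintro ⟨k, l, m⟩ ht
      simp only [mem_filter, mem_product, mem_Icc] at ht
      obtain ⟨⟨⟨hk1, _⟩, ⟨hl1, _⟩, ⟨hm1, _⟩⟩, heq⟩ := ht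
      have hd0 : l * m ^ 2 ≠ 0 := by positivity
      have hkey : k * (l * m ^ 2) ^ (r + 1) = n := by
        rw [mul_pow, ← pow_mul]
        rw [← heq]; ring_nf
      have hdr : (l * m ^ 2) ^ (r + 1) ∣ n := Dvd.intro_left k hkey
      simp only [Finset.mem_sigma, mem_filter, Nat.mem_divisors]
      refine ⟨⟨⟨(dvd_pow_self _ (Nat.succ_ne_zero r)).trans hdr, hn0⟩, hdr⟩,
        ⟨(dvd_pow_self m two_ne_zero).trans ⟨l, mul_comm _ _⟩, hd0⟩, ⟨l, mul_comm _ _⟩⟩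
    · rintro ⟨d, m⟩ hx
      simp only [Finset.mem_sigma, mem_filter, Nat.mem_divisors] at hx
      obtain ⟨⟨⟨hdn, _⟩, hdr⟩, ⟨hmd, hd0⟩, hm2⟩ := hx
      have hdpos : 0 < d := Nat.pos_of_ne_zero hd0
      have hmpos : 0 < m := Nat.pos_of_dvd_of_pos hmd hdpos
      have hdle : d ≤ n := Nat.le_of_dvd hnpos hdn
      have hdrpos : 0 < d ^ (r + 1) := pow_pos hdpos _
      simp only [mem_filter, mem_product, mem_Icc]
      refine ⟨⟨⟨?_, Nat.div_le_self _ _⟩, ⟨?_, ?_⟩, hmpos, le_trans (Nat.le_of_dvd hdpos hmd) hdle⟩, ?_⟩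
      · exact Nat.div_pos (Nat.le_of_dvd hnpos hdr) hdrpos
      · exact Nat.div_pos (Nat.le_of_dvd hdpos hm2) (pow_pos hmpos 2)
      · exact le_trans (Nat.div_le_self _ _) hdle
      · have h1 : (d / m ^ 2) ^ (r + 1) * (m ^ 2) ^ (r + 1) = d ^ (r + 1) := by
          rw [← mul_pow, Nat.div_mul_cancel hm2]
        have h2 : m ^ (2 * r + 2) = (m ^ 2) ^ (r + 1) := by
          rw [← pow_mul]; ring_nf
        rw [h2, mul_assoc, h1, Nat.div_mul_cancel hdr]
    · rintro ⟨k, l, m⟩ ht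
      simp only [mem_filter, mem_product, mem_Icc] at ht
      obtain ⟨⟨⟨hk1, _⟩, ⟨hl1, _⟩, ⟨hm1, _⟩⟩, heq⟩ := ht
      have hkey : k * (l * m ^ 2) ^ (r + 1) = n := by
        rw [mul_pow, ← pow_mul]
        rw [← heq]; ring_nf
      have hm2pos : 0 < m ^ 2 := by positivity
      have hdpos : 0 < (l * m ^ 2) ^ (r + 1) := by positivity
      simp only
      rw [Nat.mul_div_cancel l hm2pos, ← hkey, Nat.mul_div_cancel k hdpos]
    · rintro ⟨d, m⟩ hx
      simp only [Finset.mem_sigma, mem_filter, Nat.mem_divisors] at hx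
      obtain ⟨⟨⟨hdn, _⟩, hdr⟩, ⟨hmd, hd0⟩, hm2⟩ := hx
      simp only
      rw [Nat.div_mul_cancel hm2]
    · intros; rfl
  rw [step1, Finset.sum_sigma]
  have step2 : ∀ d ∈ n.divisors.filter fun d => d ^ (r + 1) ∣ n,
      ∑ m ∈ d.divisors.filter fun m => m ^ 2 ∣ d, (μ m : ℤ) =
        if Squarefree d then 1 else 0 := by
    intro d hd
    have hd0 : d ≠ 0 := (Nat.pos_of_mem_divisors (mem_filter.mp hd).1).ne'
    exact sum_moebius_sq_dvd hd0
  rw [Finset.sum_congr rfl step2, Finset.sum_boole, Finset.filter_filter,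
    card_sf r n hn0, tauOrd]
end

section
/- For every integer r ≥ 1 and every complex s with Re(s) > 2, ∑_{n=1}^∞ z_r(n)/n^s = ζ(s−1)·ζ((r+1)s−r)/ζ((r+2)s−r−1), where z_r(n) = ∑ a·b^r·c^{r+1}·μ(c), the sum running over all triples (a,b,c) of positive integers with a·b^{r+1}·c^{r+2} = n, μ is the Möbius function, and ζ is the Riemann zeta function. -/
open Filter

/-- `z_r(n) = ∑_{a·b^{r+1}·c^{r+2} = n} a·b^r·c^{r+1}·μ(c)`. -/
def zfun (r n : ℕ) : ℤ :=
  ∑ t ∈ (Finset.Icc 1 n ×ˢ Finset.Icc 1 n ×ˢ Finset.Icc 1 n).filter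
      (fun t : ℕ × ℕ × ℕ => t.1 * t.2.1 ^ (r + 1) * t.2.2 ^ (r + 2) = n),
    (t.1 : ℤ) * (t.2.1 : ℤ) ^ r * (t.2.2 : ℤ) ^ (r + 1) * ArithmeticFunction.moebius t.2.2

open Complex ArithmeticFunction in
lemma zfun_term_eq (r : ℕ) (s : ℂ) (a b c : ℕ) (ha : (a:ℂ) ≠ 0) (hb : (b:ℂ) ≠ 0)
    (hc : (c:ℂ) ≠ 0) :
    ((a:ℂ) * (b:ℂ) ^ r * (c:ℂ) ^ (r+1) * (moebius c : ℂ)) /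
        ((a * b ^ (r+1) * c ^ (r+2) : ℕ) : ℂ) ^ s
      = (1 / (a:ℂ) ^ (s - 1)) *
          ((1 / (b:ℂ) ^ (((r:ℂ) + 1) * s - r)) *
            ((moebius c : ℂ) / (c:ℂ) ^ (((r:ℂ) + 2) * s - (r:ℂ) - 1))) := by
  have hmul : ∀ m n : ℕ, ((m * n : ℕ) : ℂ) ^ s = ((m : ℕ) : ℂ) ^ s * ((n : ℕ) : ℂ) ^ s := by
    intro m n
    rw [Nat.cast_mul]
    exact natCast_mul_natCast_cpow m n s
  have h1 : ((a * b ^ (r+1) * c ^ (r+2) : ℕ) : ℂ) ^ s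
      = (a:ℂ) ^ s * ((b:ℂ) ^ (r+1)) ^ s * ((c:ℂ) ^ (r+2)) ^ s := by
    rw [hmul (a * b ^ (r+1)) (c ^ (r+2)), hmul a (b ^ (r+1))]
    push_cast
    ring
  have ha2 : (a:ℂ) ^ (s - 1) = (a:ℂ) ^ s / (a:ℂ) := by
    rw [cpow_sub _ _ ha, cpow_one]
  have hb2 : (b:ℂ) ^ (((r:ℂ) + 1) * s - r) = ((b:ℂ) ^ (r+1)) ^ s / (b:ℂ) ^ r := by
    rw [cpow_sub _ _ hb, cpow_natCast]
    congr 1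
    rw [show ((r:ℂ) + 1) = ((r + 1 : ℕ) : ℂ) by push_cast; ring,
      natCast_cpow_natCast_mul]
  have hc2 : (c:ℂ) ^ (((r:ℂ) + 2) * s - (r:ℂ) - 1) = ((c:ℂ) ^ (r+2)) ^ s / (c:ℂ) ^ (r+1) := by
    rw [sub_sub, show ((r:ℂ) + 1) = (((r+1 : ℕ)) : ℂ) by push_cast; ring,
      cpow_sub _ _ hc, cpow_natCast]
    congr 1
    rw [show ((r:ℂ) + 2) = ((r + 2 : ℕ) : ℂ) by push_cast; ring,
      natCast_cpow_natCast_mul]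
  have has : (a:ℂ) ^ s ≠ 0 := by
    simp [cpow_eq_zero_iff, ha]
  have hbs : ((b:ℂ) ^ (r+1)) ^ s ≠ 0 := by
    simp [cpow_eq_zero_iff, pow_eq_zero_iff, hb]
  have hcs : ((c:ℂ) ^ (r+2)) ^ s ≠ 0 := by
    simp [cpow_eq_zero_iff, pow_eq_zero_iff, hc]
  rw [h1, ha2, hb2, hc2]
  field_simp

set_option maxHeartbeats 1000000 in
open Complex ArithmeticFunction in
theorem stmt_10 (r : ℕ) (hr : 1 ≤ r) (s : ℂ) (hs : 2 < s.re) :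
    ∑' n : ℕ, (zfun r n : ℂ) / (n : ℂ) ^ s =
      riemannZeta (s - 1) * riemannZeta (((r : ℂ) + 1) * s - r) /
        riemannZeta (((r : ℂ) + 2) * s - (r : ℂ) - 1) := by
  have hr1 : (1:ℝ) ≤ (r:ℝ) := by exact_mod_cast hr
  have hs1 : 1 < (s - 1).re := by
    simp only [Complex.sub_re, Complex.one_re]
    linarith
  have hA : 1 < (((r:ℂ) + 1) * s - r).re := by
    simp only [Complex.sub_re, Complex.mul_re, Complex.add_re, Complex.natCast_re,
      Complex.one_re, Complex.add_im, Complex.natCast_im, Complex.one_im, add_zero, zero_mul,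
      sub_zero]
    nlinarith
  have hB : 1 < (((r:ℂ) + 2) * s - (r:ℂ) - 1).re := by
    simp only [Complex.sub_re, Complex.mul_re, Complex.add_re, Complex.natCast_re,
      Complex.one_re, Complex.add_im, Complex.natCast_im, Complex.one_im, add_zero, zero_mul,
      sub_zero, Complex.re_ofNat, Complex.im_ofNat]
    nlinarith
  set A : ℂ := ((r:ℂ) + 1) * s - r with hAdef
  set B : ℂ := ((r:ℂ) + 2) * s - (r:ℂ) - 1 with hBdef
  set G : ℕ → ℂ := fun a => 1 / (a:ℂ) ^ (s - 1) with hGdef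
  set H : ℕ → ℂ := fun b => 1 / (b:ℂ) ^ A with hHdef
  set K : ℕ → ℂ := fun c => (moebius c : ℂ) / (c:ℂ) ^ B with hKdef
  have hGs : Summable fun a => ‖G a‖ :=
    summable_norm_iff.mpr (Complex.summable_one_div_nat_cpow.mpr hs1)
  have hHs : Summable fun b => ‖H b‖ :=
    summable_norm_iff.mpr (Complex.summable_one_div_nat_cpow.mpr hA)
  have hKs : Summable fun c => ‖K c‖ := by
    refine Summable.of_nonneg_of_le (fun _ => norm_nonneg _) (fun c => ?_)
      (summable_norm_iff.mpr (Complex.summable_one_div_nat_cpow.mpr hB))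
    simp only [hKdef, norm_div, norm_one]
    have hmu : ‖((moebius c : ℤ) : ℂ)‖ ≤ 1 := by
      rw [Complex.norm_intCast]
      exact_mod_cast ArithmeticFunction.abs_moebius_le_one (n := c)
    gcongr
  have hHK : Summable fun p : ℕ × ℕ => ‖H p.1 * K p.2‖ := by
    have h := summable_mul_of_summable_norm (R := ℝ) (f := fun b => ‖H b‖)
      (g := fun c => ‖K c‖) (by simpa only [norm_norm] using hHs)
      (by simpa only [norm_norm] using hKs)
    simpa only [norm_mul] using h
  have hF : Summable fun t : ℕ × ℕ × ℕ => G t.1 * (H t.2.1 * K t.2.2) := by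
    have := summable_mul_of_summable_norm (f := G) (g := fun p : ℕ × ℕ => H p.1 * K p.2) hGs hHK
    exact this
  set φ : ℕ × ℕ × ℕ → ℕ := fun t => t.1 * t.2.1 ^ (r+1) * t.2.2 ^ (r+2) with hφdef
  have hfib := (hF.hasSum.tsum_fiberwise φ).tsum_eq
  have hkey : ∀ n : ℕ, (zfun r n : ℂ) / (n : ℂ) ^ s
      = ∑' t : (φ ⁻¹' {n} : Set (ℕ × ℕ × ℕ)), G t.1.1 * (H t.1.2.1 * K t.1.2.2) := by
    intro n
    rcases eq_or_ne n 0 with rfl | hn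
    · have hz : zfun r 0 = 0 := by simp [zfun]
      rw [hz]
      have : ∀ t : (φ ⁻¹' ({0} : Set ℕ) : Set (ℕ × ℕ × ℕ)),
          G t.1.1 * (H t.1.2.1 * K t.1.2.2) = 0 := by
        rintro ⟨⟨a, b, c⟩, ht⟩
        simp only [Set.mem_preimage, Set.mem_singleton_iff, hφdef] at ht
        rcases Nat.mul_eq_zero.mp ht with h | h
        · rcases Nat.mul_eq_zero.mp h with h' | h'
          · subst h'
            simp [hGdef, Complex.zero_cpow (ne_zero_of_one_lt_re hs1)]
          · have : b = 0 := by
              exact pow_eq_zero_iff (by omega) |>.mp h'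
            subst this
            simp [hHdef, Complex.zero_cpow (ne_zero_of_one_lt_re hA)]
        · have : c = 0 := pow_eq_zero_iff (by omega) |>.mp h
          subst this
          simp [hKdef]
      rw [tsum_congr this]
      simp
    · have hset : (φ ⁻¹' {n} : Set (ℕ × ℕ × ℕ))
          = ↑((Finset.Icc 1 n ×ˢ Finset.Icc 1 n ×ˢ Finset.Icc 1 n).filter
              (fun t : ℕ × ℕ × ℕ => t.1 * t.2.1 ^ (r + 1) * t.2.2 ^ (r + 2) = n)) := by
        ext ⟨a, b, c⟩
        simp only [Set.mem_preimage, Set.mem_singleton_iff, Finset.coe_filter,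
          Finset.mem_product, Finset.mem_Icc, Set.mem_setOf_eq, hφdef]
        constructor
        · intro h
          have ha0 : a ≠ 0 := by rintro rfl; simp at h; omega
          have hb0 : b ≠ 0 := by
            rintro rfl; rw [zero_pow (by omega)] at h; simp at h; omega
          have hc0 : c ≠ 0 := by
            rintro rfl; rw [zero_pow (by omega)] at h; simp at h; omega
          have hnpos : 0 < n := Nat.pos_of_ne_zero hn
          have hale : a ≤ n := Nat.le_of_dvd hnpos ⟨b ^ (r+1) * c ^ (r+2), by rw [← h]; ring⟩
          have hble : b ≤ n := by
            have h1 : b ∣ b ^ (r+1) := dvd_pow_self b (Nat.succ_ne_zero r)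
            have h2 : b ^ (r+1) ∣ n := ⟨a * c ^ (r+2), by rw [← h]; ring⟩
            exact Nat.le_of_dvd hnpos (h1.trans h2)
          have hcle : c ≤ n := by
            have h1 : c ∣ c ^ (r+2) := dvd_pow_self c (Nat.succ_ne_zero (r+1))
            have h2 : c ^ (r+2) ∣ n := ⟨a * b ^ (r+1), by rw [← h]; ring⟩
            exact Nat.le_of_dvd hnpos (h1.trans h2)
          exact ⟨⟨⟨Nat.one_le_iff_ne_zero.mpr ha0, hale⟩,
            ⟨Nat.one_le_iff_ne_zero.mpr hb0, hble⟩,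
            ⟨Nat.one_le_iff_ne_zero.mpr hc0, hcle⟩⟩, h⟩
        · exact fun h => h.2
      rw [hset]
      refine Eq.trans ?_ (Finset.tsum_subtype'
        ((Finset.Icc 1 n ×ˢ Finset.Icc 1 n ×ˢ Finset.Icc 1 n).filter
          (fun t : ℕ × ℕ × ℕ => t.1 * t.2.1 ^ (r + 1) * t.2.2 ^ (r + 2) = n))
        (fun t : ℕ × ℕ × ℕ => G t.1 * (H t.2.1 * K t.2.2))).symm
      rw [zfun]
      push_cast
      rw [Finset.sum_div]
      refine Finset.sum_congr rfl ?_
      rintro ⟨a, b, c⟩ hmem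
      simp only [Finset.mem_filter, Finset.mem_product, Finset.mem_Icc] at hmem
      obtain ⟨⟨⟨ha1, _⟩, ⟨hb1, _⟩, ⟨hc1, _⟩⟩, heq⟩ := hmem
      have ha : (a:ℂ) ≠ 0 := Nat.cast_ne_zero.mpr (by omega)
      have hb : (b:ℂ) ≠ 0 := Nat.cast_ne_zero.mpr (by omega)
      have hc : (c:ℂ) ≠ 0 := Nat.cast_ne_zero.mpr (by omega)
      rw [← heq]
      simp only [hGdef, hHdef, hKdef, hAdef, hBdef]
      push_cast
      exact_mod_cast zfun_term_eq r s a b c ha hb hc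
  have hmain : ∑' n : ℕ, (zfun r n : ℂ) / (n : ℂ) ^ s
      = ∑' t : ℕ × ℕ × ℕ, G t.1 * (H t.2.1 * K t.2.2) := by
    rw [tsum_congr hkey]
    exact hfib
  have hprod : ∑' t : ℕ × ℕ × ℕ, G t.1 * (H t.2.1 * K t.2.2)
      = (∑' a, G a) * ((∑' b, H b) * (∑' c, K c)) := by
    calc ∑' t : ℕ × ℕ × ℕ, G t.1 * (H t.2.1 * K t.2.2)
        = (∑' a, G a) * (∑' p : ℕ × ℕ, H p.1 * K p.2) :=
          (tsum_mul_tsum_of_summable_norm hGs hHK).symm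
      _ = (∑' a, G a) * ((∑' b, H b) * (∑' c, K c)) := by
          rw [← tsum_mul_tsum_of_summable_norm hHs hKs]
  have hGz : ∑' a, G a = riemannZeta (s - 1) := (zeta_eq_tsum_one_div_nat_cpow hs1).symm
  have hHz : ∑' b, H b = riemannZeta A := (zeta_eq_tsum_one_div_nat_cpow hA).symm
  have hKz : ∑' c, K c = (riemannZeta B)⁻¹ := by
    have h1 : ∑' c, K c = LSeries (fun n => (moebius n : ℂ)) B := by
      refine tsum_congr fun n => ?_
      rcases eq_or_ne n 0 with rfl | hn
      · simp [hKdef, LSeries.term]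
      · rw [LSeries.term_of_ne_zero hn]
    have h2 := LSeries_zeta_mul_Lseries_moebius hB
    rw [LSeries_zeta_eq_riemannZeta hB] at h2
    have hζ : riemannZeta B ≠ 0 := riemannZeta_ne_zero_of_one_lt_re hB
    rw [h1, inv_eq_one_div, eq_div_iff hζ, mul_comm]
    exact h2
  rw [hmain, hprod, hGz, hHz, hKz, div_eq_mul_inv]
  ring
end
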